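/- arXiv:1306.3495 — 3 statements merged into one kernel-verified Lean document; each statement's English description precedes it below -/
import Mathlib

section
/- Let B be an n×n integer matrix and D = diag(d_1,…,d_n) with each d_i a positive integer such that DB is skew-symmetric. Define the matrix C by c_{ij} = gcd(d_i,d_j)·b_{ij}/d_j. Then C is a skew-symmetric integer matrix. -/
/-- If `D = diag(d₁,…,dₙ)` (with positive diagonal entries) skew-symmetrizes the integer
matrix `B` (i.e. `dᵢ bᵢⱼ = -dⱼ bⱼᵢ`), then the matrix `C` with
`cᵢⱼ = gcd(dᵢ,dⱼ)·bᵢⱼ/dⱼ` is a skew-symmetric integer matrix. -/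
theorem stmt1 {n : ℕ} (B : Matrix (Fin n) (Fin n) ℤ) (d : Fin n → ℤ)
    (hd : ∀ i, 0 < d i) (h : ∀ i j, d i * B i j = -(d j * B j i)) :
    ∃ C : Matrix (Fin n) (Fin n) ℤ,
      (∀ i j, (C i j : ℚ) = (Int.gcd (d i) (d j) : ℚ) * (B i j : ℚ) / (d j : ℚ)) ∧
      (∀ i j, C j i = -C i j) := by
  have hdvd : ∀ i j, d j ∣ (Int.gcd (d i) (d j) : ℤ) * B i j := by
    intro i j
    set g : ℤ := (Int.gcd (d i) (d j) : ℤ) with hg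
    have hgpos : 0 < Int.gcd (d i) (d j) := by
      rw [Int.gcd_pos_iff]
      exact Or.inr (hd j).ne'
    have hg0 : g ≠ 0 := by positivity
    have hgi : g ∣ d i := Int.gcd_dvd_left (d i) (d j)
    have hgj : g ∣ d j := Int.gcd_dvd_right (d i) (d j)
    have hdj : d j ∣ d i * B i j := ⟨-B j i, by rw [h i j]; ring⟩
    have hcop : IsCoprime (d j / g) (d i / g) := by
      rw [Int.isCoprime_iff_gcd_eq_one]
      have := Int.gcd_div_gcd_div_gcd (i := d j) (j := d i)
        (by rwa [Int.gcd_comm] at hgpos)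
      rwa [Int.gcd_comm (d j) (d i)] at this
    have hdvd2 : d j / g ∣ (d i / g) * B i j := by
      rcases hdj with ⟨k, hk⟩
      refine ⟨k, ?_⟩
      apply mul_left_cancel₀ hg0
      rw [← mul_assoc, ← mul_assoc, Int.mul_ediv_cancel' hgj, Int.mul_ediv_cancel' hgi, hk]
    have hdvd3 : d j / g ∣ B i j := hcop.dvd_of_dvd_mul_left hdvd2
    calc d j = g * (d j / g) := (Int.mul_ediv_cancel' hgj).symm
      _ ∣ g * B i j := mul_dvd_mul_left g hdvd3
  refine ⟨fun i j => ((Int.gcd (d i) (d j) : ℤ) * B i j) / d j, fun i j => ?_, fun i j => ?_⟩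
  · have hj : (d j : ℚ) ≠ 0 := by exact_mod_cast (hd j).ne'
    rw [Int.cast_div (hdvd i j) (by exact_mod_cast (hd j).ne')]
    push_cast
    ring
  · have hi : (d i : ℚ) ≠ 0 := by exact_mod_cast (hd i).ne'
    have hj : (d j : ℚ) ≠ 0 := by exact_mod_cast (hd j).ne'
    have : ((((Int.gcd (d j) (d i) : ℤ) * B j i) / d i : ℤ) : ℚ)
        = -((((Int.gcd (d i) (d j) : ℤ) * B i j) / d j : ℤ) : ℚ) := by
      rw [Int.cast_div (hdvd j i) (by exact_mod_cast (hd i).ne'),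
        Int.cast_div (hdvd i j) (by exact_mod_cast (hd j).ne')]
      rw [Int.gcd_comm (d j) (d i)]
      field_simp
      have hh : (d j : ℚ) * (B j i : ℚ) = -((d i : ℚ) * (B i j : ℚ)) := by
        exact_mod_cast (h j i)
      push_cast
      linear_combination ((Int.gcd (d i) (d j) : ℕ) : ℚ) * hh
    exact_mod_cast this
end

section
/- Consider the 4×4 integer matrix B with rows (0, -a, 0, b), (1, 0, -1, 0), (0, a, 0, -b), (-1, 0, 1, 0), where a < b are positive integers and a does not divide b. Then B is skew-symmetrizable with skew-symmetrizer diag(1, a, 1, b), and B does not admit a global unfolding: for every unfolding (C, (e_i), (E_i)) of B, the matrix μ₂μ₄(C) violates the sign condition (2); specifically, the E₁×E₃ block of μ₂μ₄(C) contains both a positive and a negative entry. -/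
/-- Fomin–Zelevinsky matrix mutation at index `k` (for a matrix over any index type),
using `b'_{ij} = b_{ij} + [b_{ik}]₊[b_{kj}]₊ − [−b_{ik}]₊[−b_{kj}]₊` for `i,j ≠ k`. -/
def mutFZ {ι : Type} [DecidableEq ι] (k : ι) (B : Matrix ι ι ℤ) : Matrix ι ι ℤ :=
  fun i j =>
    if i = k ∨ j = k then -B i j
    else B i j + max (B i k) 0 * max (B k j) 0 - max (-B i k) 0 * max (-B k j) 0

/-- `(C, (eᵢ), (Eᵢ))` is an unfolding of the skew-symmetrizable matrix `B`: the `eᵢ` are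
positive with `bᵢⱼeⱼ = -bⱼᵢeᵢ`, `C` (indexed by the disjoint union of the `Eᵢ = Fin (eᵢ)`)
is skew-symmetric, each column of the `Eᵢ×Eⱼ` block of `C` sums to `bᵢⱼ`, and the
`Eᵢ×Eⱼ` block is nonnegative whenever `bᵢⱼ ≥ 0`. -/
def IsUnfolding {n : ℕ} (B : Matrix (Fin n) (Fin n) ℤ) (e : Fin n → ℕ)
    (C : Matrix ((i : Fin n) × Fin (e i)) ((i : Fin n) × Fin (e i)) ℤ) : Prop :=
  (∀ i, 0 < e i) ∧
  (∀ i j, B i j * (e j : ℤ) = -(B j i * (e i : ℤ))) ∧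
  (∀ x y, C y x = -C x y) ∧
  (∀ (i j : Fin n) (q : Fin (e j)), (∑ p : Fin (e i), C ⟨i, p⟩ ⟨j, q⟩) = B i j) ∧
  (∀ i j, 0 ≤ B i j → ∀ (p : Fin (e i)) (q : Fin (e j)), 0 ≤ C ⟨i, p⟩ ⟨j, q⟩) 

/-- The composite mutation `μ_k = ∏_{k̄ ∈ E_k} μ_{k̄}` of an unfolded matrix (well defined
since the diagonal blocks vanish, so the factors commute). -/
def compMut {n : ℕ} {e : Fin n → ℕ} (k : Fin n)
    (C : Matrix ((i : Fin n) × Fin (e i)) ((i : Fin n) × Fin (e i)) ℤ) :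
    Matrix ((i : Fin n) × Fin (e i)) ((i : Fin n) × Fin (e i)) ℤ :=
  ((List.finRange (e k)).map
      (fun z => mutFZ (⟨k, z⟩ : (i : Fin n) × Fin (e i)))).foldl (fun M f => f M) C

lemma fold_mut {ι : Type} [DecidableEq ι] (L : List ι) (hnd : L.Nodup)
    (C : Matrix ι ι ℤ) (hK : ∀ k ∈ L, ∀ k' ∈ L, C k k' = 0)
    {x y : ι} (hx : x ∉ L) (hy : y ∉ L) :
    ((L.map (fun z => mutFZ z)).foldl (fun M f => f M) C) x y
      = C x y + (L.map (fun k =>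
          max (C x k) 0 * max (C k y) 0 - max (-C x k) 0 * max (-C k y) 0)).sum := by
  induction L generalizing C with
  | nil => simp
  | cons k T ih =>
    have hkT : k ∉ T := (List.nodup_cons.mp hnd).1
    have hndT : T.Nodup := (List.nodup_cons.mp hnd).2
    have hxk : x ≠ k := fun h => hx (h ▸ (List.mem_cons_self (a := k) (l := T)))
    have hyk : y ≠ k := fun h => hy (h ▸ (List.mem_cons_self (a := k) (l := T)))
    have hxT : x ∉ T := fun h => hx (List.mem_cons_of_mem _ h)
    have hyT : y ∉ T := fun h => hy (List.mem_cons_of_mem _ h)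
    set C' := mutFZ k C with hC'
    have hK' : ∀ k₁ ∈ T, ∀ k₂ ∈ T, C' k₁ k₂ = 0 := by
      intro k₁ h₁ k₂ h₂
      have h₁' := List.mem_cons_of_mem k h₁
      have h₂' := List.mem_cons_of_mem k h₂
      simp only [hC', mutFZ]
      rcases eq_or_ne k₁ k with rfl | hk1
      · simp [hK _ h₁' _ h₂']
      · rcases eq_or_ne k₂ k with rfl | hk2
        · simp [hK _ h₁' _ h₂']
        · rw [if_neg (by tauto)]
          rw [hK _ h₁' _ h₂', hK _ h₁' _ ((List.mem_cons_self (a := k) (l := T))),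
            hK _ ((List.mem_cons_self (a := k) (l := T))) _ h₂']
          simp
    have hxy' : C' x y = C x y
        + (max (C x k) 0 * max (C k y) 0 - max (-C x k) 0 * max (-C k y) 0) := by
      simp only [hC', mutFZ]; rw [if_neg (by tauto)]; ring
    have hxk' : ∀ k' ∈ T, C' x k' = C x k' := by
      intro k' hk'
      have hk'k : k' ≠ k := fun h => hkT (h ▸ hk')
      simp only [hC', mutFZ]; rw [if_neg (by tauto)]
      rw [hK _ ((List.mem_cons_self (a := k) (l := T))) _ (List.mem_cons_of_mem _ hk')]
      simp
    have hk'y : ∀ k' ∈ T, C' k' y = C k' y := by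
      intro k' hk'
      have hk'k : k' ≠ k := fun h => hkT (h ▸ hk')
      simp only [hC', mutFZ]; rw [if_neg (by tauto)]
      rw [hK _ (List.mem_cons_of_mem _ hk') _ ((List.mem_cons_self (a := k) (l := T)))]
      simp
    have step : ((((k :: T)).map (fun z => mutFZ z)).foldl (fun M f => f M) C)
        = ((T.map (fun z => mutFZ z)).foldl (fun M f => f M) C') := by
      simp [hC']
    rw [step, ih hndT C' hK' hxT hyT, hxy']
    have hmap : T.map (fun k' =>
          max (C' x k') 0 * max (C' k' y) 0 - max (-C' x k') 0 * max (-C' k' y) 0)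
        = T.map (fun k' =>
          max (C x k') 0 * max (C k' y) 0 - max (-C x k') 0 * max (-C k' y) 0) := by
      apply List.map_congr_left
      intro k' hk'
      rw [hxk' k' hk', hk'y k' hk']
    rw [hmap]
    simp [List.map_cons, List.sum_cons]
    ring

lemma compMut_apply {n : ℕ} {e : Fin n → ℕ} (k : Fin n)
    (C : Matrix ((i : Fin n) × Fin (e i)) ((i : Fin n) × Fin (e i)) ℤ)
    (hK : ∀ z z', C ⟨k, z⟩ ⟨k, z'⟩ = 0)
    (x y : (i : Fin n) × Fin (e i)) (hx : x.1 ≠ k) (hy : y.1 ≠ k) :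
    compMut k C x y = C x y + ∑ z : Fin (e k),
      (max (C x ⟨k, z⟩) 0 * max (C ⟨k, z⟩ y) 0
        - max (-C x ⟨k, z⟩) 0 * max (-C ⟨k, z⟩ y) 0) := by
  set L : List ((i : Fin n) × Fin (e i)) :=
    (List.finRange (e k)).map (fun z => (⟨k, z⟩ : (i : Fin n) × Fin (e i))) with hLdef
  have hnd : L.Nodup := (List.nodup_finRange _).map (fun z z' h => by simpa using h)
  have hK' : ∀ w ∈ L, ∀ w' ∈ L, C w w' = 0 := by
    intro w hw w' hw'
    obtain ⟨z, -, rfl⟩ := List.mem_map.mp hw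
    obtain ⟨z', -, rfl⟩ := List.mem_map.mp hw'
    exact hK z z'
  have hxL : x ∉ L := by
    intro hmem
    obtain ⟨z, -, hz⟩ := List.mem_map.mp hmem
    exact hx (by rw [← hz])
  have hyL : y ∉ L := by
    intro hmem
    obtain ⟨z, -, hz⟩ := List.mem_map.mp hmem
    exact hy (by rw [← hz])
  have hL : compMut k C = ((L.map (fun w => mutFZ w)).foldl (fun M f => f M) C) := by
    rw [hLdef, List.map_map]; rfl
  rw [hL, fold_mut L hnd C hK' hxL hyL]
  congr 1
  rw [hLdef, List.map_map, Fin.sum_univ_def]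
  rfl

lemma exists_one {α : Type} [Fintype α] [DecidableEq α] (f : α → ℤ) (h0 : ∀ x, 0 ≤ f x)
    (h1 : ∑ x, f x = 1) : ∃ z, ∀ w, f w = if w = z then 1 else 0 := by
  have hne : ∃ z, f z ≠ 0 := by
    by_contra hc; push_neg at hc
    rw [Finset.sum_eq_zero (fun x _ => hc x)] at h1; norm_num at h1
  obtain ⟨z, hz⟩ := hne
  have hz0 : 0 < f z := (h0 z).lt_of_ne (Ne.symm hz)
  have hz1 : 1 ≤ f z := hz0
  have hsplit : f z + ∑ w ∈ Finset.univ.erase z, f w = 1 := by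
    rw [Finset.add_sum_erase _ f (Finset.mem_univ z)]; exact h1
  have hrest0 : ∑ w ∈ Finset.univ.erase z, f w = 0 :=
    le_antisymm (by linarith) (Finset.sum_nonneg fun w _ => h0 w)
  have hall : ∀ w ∈ Finset.univ.erase z, f w = 0 :=
    (Finset.sum_eq_zero_iff_of_nonneg (fun w _ => h0 w)).mp hrest0
  refine ⟨z, fun w => ?_⟩
  by_cases hw : w = z
  · subst hw; rw [if_pos rfl]; linarith
  · rw [if_neg hw]; exact hall w (Finset.mem_erase.mpr ⟨hw, Finset.mem_univ w⟩)

/-- The skew-symmetrizable matrix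
`B = [[0,-a,0,b],[1,0,-1,0],[0,a,0,-b],[-1,0,1,0]]` (with `0 < a < b` and `a ∤ b`) has
skew-symmetrizer `diag(1,a,1,b)`, and it does not admit a global unfolding: for every
unfolding `(C,(eᵢ),(Eᵢ))` of `B`, the matrix `μ₂μ₄(C)` violates the sign condition of
unfoldings — concretely, its `E₁×E₃` block contains both a positive and a negative
entry. -/
theorem stmt18 (a b : ℤ) (ha : 0 < a) (hab : a < b) (hnd : ¬ a ∣ b)
    (B : Matrix (Fin 4) (Fin 4) ℤ)
    (hB : B = !![0, -a, 0, b; 1, 0, -1, 0; 0, a, 0, -b; -1, 0, 1, 0])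
    (dvec : Fin 4 → ℤ) (hdvec : dvec = ![1, a, 1, b]) :
    (∀ i j, dvec i * B i j = -(dvec j * B j i)) ∧
    ∀ (e : Fin 4 → ℕ)
      (C : Matrix ((i : Fin 4) × Fin (e i)) ((i : Fin 4) × Fin (e i)) ℤ),
      IsUnfolding B e C →
      (∃ (p : Fin (e 0)) (q : Fin (e 2)),
        0 < compMut 1 (compMut 3 C) ⟨0, p⟩ ⟨2, q⟩) ∧
      (∃ (p : Fin (e 0)) (q : Fin (e 2)),
        compMut 1 (compMut 3 C) ⟨0, p⟩ ⟨2, q⟩ < 0) := by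
  have ha0 : (0:ℤ) ≤ a := le_of_lt ha
  have hb0 : (0:ℤ) ≤ b := le_of_lt (lt_trans ha hab)
  constructor
  · rw [hB, hdvec]
    intro i j; fin_cases i <;> fin_cases j <;> norm_num
  · intro e C hU
    obtain ⟨hpos, hrel, hskew, hcol, hsgn⟩ := hU
    -- entry values of B
    have B01 : B 0 1 = -a := by rw [hB]; norm_num
    have B03 : B 0 3 = b := by rw [hB]; rfl
    have B10 : B 1 0 = 1 := by rw [hB]; norm_num
    have B12 : B 1 2 = -1 := by rw [hB]; rfl
    have B21 : B 2 1 = a := by rw [hB]; rfl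
    have B30 : B 3 0 = -1 := by rw [hB]; rfl
    have B32 : B 3 2 = 1 := by rw [hB]; rfl
    have B02 : B 0 2 = 0 := by rw [hB]; rfl
    have B20 : B 2 0 = 0 := by rw [hB]; rfl
    have B13 : B 1 3 = 0 := by rw [hB]; rfl
    have B31 : B 3 1 = 0 := by rw [hB]; rfl
    have B11 : B 1 1 = 0 := by rw [hB]; norm_num
    have B33 : B 3 3 = 0 := by rw [hB]; rfl
    -- zero blocks
    have hzblk : ∀ (i j : Fin 4), 0 ≤ B i j → 0 ≤ B j i →
        ∀ (p : Fin (e i)) (q : Fin (e j)), C ⟨i, p⟩ ⟨j, q⟩ = 0 := by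
      intro i j h1 h2 p q
      have hA := hsgn i j h1 p q
      have hBn := hsgn j i h2 q p
      rw [hskew ⟨i, p⟩ ⟨j, q⟩] at hBn
      linarith
    have hz33 : ∀ z z', C ⟨3, z⟩ ⟨3, z'⟩ = 0 :=
      fun z z' => hzblk 3 3 (by rw [B33]) (by rw [B33]) z z'
    have hz11 : ∀ r r', C ⟨1, r⟩ ⟨1, r'⟩ = 0 :=
      fun r r' => hzblk 1 1 (by rw [B11]) (by rw [B11]) r r'
    have hz13 : ∀ (r : Fin (e 1)) (z : Fin (e 3)), C ⟨1, r⟩ ⟨3, z⟩ = 0 :=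
      fun r z => hzblk 1 3 (by rw [B13]) (by rw [B31]) r z
    have hz31 : ∀ (z : Fin (e 3)) (r : Fin (e 1)), C ⟨3, z⟩ ⟨1, r⟩ = 0 :=
      fun z r => hzblk 3 1 (by rw [B31]) (by rw [B13]) z r
    have hz02 : ∀ (p : Fin (e 0)) (q : Fin (e 2)), C ⟨0, p⟩ ⟨2, q⟩ = 0 :=
      fun p q => hzblk 0 2 (by rw [B02]) (by rw [B20]) p q
    -- nonneg blocks
    have h03nn : ∀ (p : Fin (e 0)) (z : Fin (e 3)), 0 ≤ C ⟨0, p⟩ ⟨3, z⟩ :=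
      fun p z => hsgn 0 3 (by rw [B03]; exact hb0) p z
    have h32nn : ∀ (z : Fin (e 3)) (q : Fin (e 2)), 0 ≤ C ⟨3, z⟩ ⟨2, q⟩ :=
      fun z q => hsgn 3 2 (by rw [B32]; norm_num) z q
    have h10nn : ∀ (r : Fin (e 1)) (p : Fin (e 0)), 0 ≤ C ⟨1, r⟩ ⟨0, p⟩ :=
      fun r p => hsgn 1 0 (by rw [B10]; norm_num) r p
    have h21nn : ∀ (q : Fin (e 2)) (r : Fin (e 1)), 0 ≤ C ⟨2, q⟩ ⟨1, r⟩ :=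
      fun q r => hsgn 2 1 (by rw [B21]; exact ha0) q r
    -- the once-mutated matrix
    set C₁ := compMut 3 C with hC₁
    have hC1_11 : ∀ r r', C₁ ⟨1, r⟩ ⟨1, r'⟩ = 0 := by
      intro r r'
      rw [hC₁, compMut_apply 3 C hz33 ⟨1, r⟩ ⟨1, r'⟩ (by simp) (by simp)]
      simp [hz11, hz13, hz31]
    have hC1_01 : ∀ (p : Fin (e 0)) (r : Fin (e 1)), C₁ ⟨0, p⟩ ⟨1, r⟩ = C ⟨0, p⟩ ⟨1, r⟩ := by
      intro p r
      rw [hC₁, compMut_apply 3 C hz33 ⟨0, p⟩ ⟨1, r⟩ (by simp) (by simp)]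
      simp [hz31]
    have hC1_12 : ∀ (r : Fin (e 1)) (q : Fin (e 2)), C₁ ⟨1, r⟩ ⟨2, q⟩ = C ⟨1, r⟩ ⟨2, q⟩ := by
      intro r q
      rw [hC₁, compMut_apply 3 C hz33 ⟨1, r⟩ ⟨2, q⟩ (by simp) (by simp)]
      simp [hz13]
    have hC1_02 : ∀ (p : Fin (e 0)) (q : Fin (e 2)),
        C₁ ⟨0, p⟩ ⟨2, q⟩ = ∑ z : Fin (e 3), C ⟨0, p⟩ ⟨3, z⟩ * C ⟨3, z⟩ ⟨2, q⟩ := by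
      intro p q
      rw [hC₁, compMut_apply 3 C hz33 ⟨0, p⟩ ⟨2, q⟩ (by simp) (by simp), hz02 p q]
      rw [zero_add]
      apply Finset.sum_congr rfl
      intro z _
      rw [max_eq_left (h03nn p z), max_eq_left (h32nn z q),
        max_eq_right (neg_nonpos.mpr (h03nn p z))]
      ring
    -- the twice-mutated entry
    have hD : ∀ (p : Fin (e 0)) (q : Fin (e 2)),
        compMut 1 C₁ ⟨0, p⟩ ⟨2, q⟩ =
          (∑ z : Fin (e 3), C ⟨0, p⟩ ⟨3, z⟩ * C ⟨3, z⟩ ⟨2, q⟩)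
          - ∑ r : Fin (e 1), C ⟨1, r⟩ ⟨0, p⟩ * C ⟨2, q⟩ ⟨1, r⟩ := by
      intro p q
      rw [compMut_apply 1 C₁ hC1_11 ⟨0, p⟩ ⟨2, q⟩ (by simp) (by simp), hC1_02 p q]
      have hterm : ∀ r : Fin (e 1),
          max (C₁ ⟨0, p⟩ ⟨1, r⟩) 0 * max (C₁ ⟨1, r⟩ ⟨2, q⟩) 0
            - max (-C₁ ⟨0, p⟩ ⟨1, r⟩) 0 * max (-C₁ ⟨1, r⟩ ⟨2, q⟩) 0
          = -(C ⟨1, r⟩ ⟨0, p⟩ * C ⟨2, q⟩ ⟨1, r⟩) := by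
        intro r
        rw [hC1_01 p r, hC1_12 r q]
        rw [hskew ⟨1, r⟩ ⟨0, p⟩, hskew ⟨2, q⟩ ⟨1, r⟩, neg_neg, neg_neg]
        rw [max_eq_right (neg_nonpos.mpr (h10nn r p)),
          max_eq_right (neg_nonpos.mpr (h21nn q r)),
          max_eq_left (h10nn r p), max_eq_left (h21nn q r)]
        ring
      rw [Finset.sum_congr rfl (fun r _ => hterm r), Finset.sum_neg_distrib]
      ring
    -- column/row sums give function structure
    have hsum03 : ∀ p : Fin (e 0), ∑ z : Fin (e 3), C ⟨0, p⟩ ⟨3, z⟩ = 1 := by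
      intro p
      have h := hcol 3 0 p
      rw [B30] at h
      have h2 : ∑ z : Fin (e 3), C ⟨0, p⟩ ⟨3, z⟩ = -∑ z : Fin (e 3), C ⟨3, z⟩ ⟨0, p⟩ := by
        rw [← Finset.sum_neg_distrib]
        exact Finset.sum_congr rfl (fun z _ => by rw [hskew ⟨3, z⟩ ⟨0, p⟩])
      rw [h2, h]; norm_num
    have hsum32 : ∀ q : Fin (e 2), ∑ z : Fin (e 3), C ⟨3, z⟩ ⟨2, q⟩ = 1 := by
      intro q
      have h := hcol 3 2 q
      rwa [B32] at h
    have hsum10 : ∀ p : Fin (e 0), ∑ r : Fin (e 1), C ⟨1, r⟩ ⟨0, p⟩ = 1 := by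
      intro p
      have h := hcol 1 0 p
      rwa [B10] at h
    have hsum21 : ∀ q : Fin (e 2), ∑ r : Fin (e 1), C ⟨2, q⟩ ⟨1, r⟩ = 1 := by
      intro q
      have h := hcol 1 2 q
      rw [B12] at h
      have h2 : ∑ r : Fin (e 1), C ⟨2, q⟩ ⟨1, r⟩ = -∑ r : Fin (e 1), C ⟨1, r⟩ ⟨2, q⟩ := by
        rw [← Finset.sum_neg_distrib]
        exact Finset.sum_congr rfl (fun r _ => by rw [hskew ⟨1, r⟩ ⟨2, q⟩])
      rw [h2, h]; norm_num
    choose u hu using fun p : Fin (e 0) =>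
      exists_one (fun z => C ⟨0, p⟩ ⟨3, z⟩) (h03nn p) (hsum03 p)
    choose hfn hh using fun q : Fin (e 2) =>
      exists_one (fun z => C ⟨3, z⟩ ⟨2, q⟩) (fun z => h32nn z q) (hsum32 q)
    choose g hg using fun p : Fin (e 0) =>
      exists_one (fun r => C ⟨1, r⟩ ⟨0, p⟩) (fun r => h10nn r p) (hsum10 p)
    choose f hf using fun q : Fin (e 2) =>
      exists_one (fun r => C ⟨2, q⟩ ⟨1, r⟩) (h21nn q) (hsum21 q)
    -- evaluate the two sums
    have hS3 : ∀ (p : Fin (e 0)) (q : Fin (e 2)),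
        (∑ z : Fin (e 3), C ⟨0, p⟩ ⟨3, z⟩ * C ⟨3, z⟩ ⟨2, q⟩)
          = if u p = hfn q then 1 else 0 := by
      intro p q
      have h1 : ∀ z : Fin (e 3), C ⟨0, p⟩ ⟨3, z⟩ * C ⟨3, z⟩ ⟨2, q⟩
          = if z = u p then C ⟨3, z⟩ ⟨2, q⟩ else 0 := by
        intro z
        rw [hu p z]
        split <;> simp
      rw [Finset.sum_congr rfl (fun z _ => h1 z),
        Finset.sum_ite_eq' Finset.univ (u p) (fun z => C ⟨3, z⟩ ⟨2, q⟩)]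
      simp [hh q (u p)]
    have hS1 : ∀ (p : Fin (e 0)) (q : Fin (e 2)),
        (∑ r : Fin (e 1), C ⟨1, r⟩ ⟨0, p⟩ * C ⟨2, q⟩ ⟨1, r⟩)
          = if g p = f q then 1 else 0 := by
      intro p q
      have h1 : ∀ r : Fin (e 1), C ⟨1, r⟩ ⟨0, p⟩ * C ⟨2, q⟩ ⟨1, r⟩
          = if r = g p then C ⟨2, q⟩ ⟨1, r⟩ else 0 := by
        intro r
        rw [hg p r]
        split <;> simp
      rw [Finset.sum_congr rfl (fun r _ => h1 r),
        Finset.sum_ite_eq' Finset.univ (g p) (fun r => C ⟨2, q⟩ ⟨1, r⟩)]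
      simp [hf q (g p)]
    have hD' : ∀ (p : Fin (e 0)) (q : Fin (e 2)),
        compMut 1 C₁ ⟨0, p⟩ ⟨2, q⟩ =
          (if u p = hfn q then (1:ℤ) else 0) - (if g p = f q then (1:ℤ) else 0) := by
      intro p q
      rw [hD p q, hS3 p q, hS1 p q]
    -- fiber counts
    have hub : ∀ z : Fin (e 3), (∑ p : Fin (e 0), if u p = z then (1:ℤ) else 0) = b := by
      intro z
      have h := hcol 0 3 z
      rw [B03] at h
      rw [← h]
      apply Finset.sum_congr rfl
      intro p _
      rw [hu p z]
      exact if_congr eq_comm rfl rfl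
    have hga : ∀ r : Fin (e 1), (∑ p : Fin (e 0), if g p = r then (1:ℤ) else 0) = a := by
      intro r
      have h := hcol 0 1 r
      rw [B01] at h
      have h2 : ∑ p : Fin (e 0), C ⟨1, r⟩ ⟨0, p⟩ = a := by
        have h3 : ∑ p : Fin (e 0), C ⟨1, r⟩ ⟨0, p⟩
            = -∑ p : Fin (e 0), C ⟨0, p⟩ ⟨1, r⟩ := by
          rw [← Finset.sum_neg_distrib]
          exact Finset.sum_congr rfl (fun p _ => by rw [hskew ⟨0, p⟩ ⟨1, r⟩])
        rw [h3, h]; ring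
      rw [← h2]
      apply Finset.sum_congr rfl
      intro p _
      rw [hg p r]
      exact if_congr eq_comm rfl rfl
    have hfa : ∀ r : Fin (e 1), (∑ q : Fin (e 2), if f q = r then (1:ℤ) else 0) = a := by
      intro r
      have h := hcol 2 1 r
      rw [B21] at h
      rw [← h]
      apply Finset.sum_congr rfl
      intro q _
      rw [hf q r]
      exact if_congr eq_comm rfl rfl
    -- pick base points
    have q₀ : Fin (e 2) := ⟨0, hpos 2⟩
    have p₀ : Fin (e 0) := ⟨0, hpos 0⟩
    constructor
    · -- positive entry
      have key1 : ∃ p : Fin (e 0), u p = hfn q₀ ∧ g p ≠ f q₀ := by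
        by_contra hcon
        push_neg at hcon
        have hle : (b:ℤ) ≤ a := by
          calc (b:ℤ) = ∑ p : Fin (e 0), if u p = hfn q₀ then (1:ℤ) else 0 := (hub _).symm
            _ ≤ ∑ p : Fin (e 0), if g p = f q₀ then (1:ℤ) else 0 := by
                apply Finset.sum_le_sum
                intro p _
                by_cases hp : u p = hfn q₀
                · rw [if_pos hp, if_pos (hcon p hp)]
                · rw [if_neg hp]; split <;> norm_num
            _ = a := hga _
        linarith
      obtain ⟨p₁, hp1, hp2⟩ := key1
      refine ⟨p₁, q₀, ?_⟩
      rw [hD' p₁ q₀, if_pos hp1, if_neg hp2]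
      norm_num
    · -- negative entry
      have key2 : ∃ (p : Fin (e 0)) (q : Fin (e 2)), g p = f q ∧ u p ≠ hfn q := by
        by_contra hcon
        push_neg at hcon
        apply hnd
        set z : Fin (e 3) := u p₀ with hzdef
        have hswap : ∀ p : Fin (e 0),
            (∑ r : Fin (e 1), if g p = r ∧ u p = z then (1:ℤ) else 0)
              = if u p = z then 1 else 0 := by
          intro p
          by_cases hp : u p = z
          · simp only [hp, and_true]
            rw [Finset.sum_ite_eq Finset.univ (g p) (fun _ => (1:ℤ))]
            simp [hp]
          · simp [hp]
        have hb' : (b:ℤ) = ∑ r : Fin (e 1), ∑ p : Fin (e 0),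
            if g p = r ∧ u p = z then (1:ℤ) else 0 := by
          calc (b:ℤ) = ∑ p : Fin (e 0), if u p = z then (1:ℤ) else 0 := (hub z).symm
            _ = ∑ p : Fin (e 0), ∑ r : Fin (e 1),
                if g p = r ∧ u p = z then (1:ℤ) else 0 :=
                  Finset.sum_congr rfl (fun p _ => (hswap p).symm)
            _ = _ := Finset.sum_comm
        have hdvd : ∀ r ∈ (Finset.univ : Finset (Fin (e 1))),
            a ∣ ∑ p : Fin (e 0), if g p = r ∧ u p = z then (1:ℤ) else 0 := by
          intro r _
          obtain ⟨q, hq⟩ : ∃ q : Fin (e 2), f q = r := by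
            by_contra hns
            push_neg at hns
            have h := hfa r
            rw [Finset.sum_eq_zero (fun q _ => if_neg (hns q))] at h
            exact absurd h.symm ha.ne'
          by_cases hz : hfn q = z
          · have heq : ∀ p : Fin (e 0), (g p = r ∧ u p = z) ↔ g p = r := fun p =>
              ⟨And.left, fun hgp => ⟨hgp, by rw [hcon p q (hgp.trans hq.symm), hz]⟩⟩
            rw [Finset.sum_congr rfl (fun p _ => if_congr (heq p) rfl rfl), hga r]
          · rw [Finset.sum_eq_zero (fun p _ => if_neg
              (fun hpz => hz ((hcon p q (hpz.1.trans hq.symm)).symm.trans hpz.2)))]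
            exact dvd_zero a
        rw [hb']
        exact Finset.dvd_sum hdvd
      obtain ⟨p₁, q₁, hgf, hne⟩ := key2
      refine ⟨p₁, q₁, ?_⟩
      rw [hD' p₁ q₁, if_neg hne, if_pos hgf]
      norm_num
end

section
/- Suppose B is an n×n skew-symmetrizable integer matrix for which there exist positive integers e_1,…,e_n with b_{ij}e_j = -b_{ji}e_i and e_i | b_{ij} for all i,j. Define C indexed by disjoint sets E_i with |E_i| = e_i via c_{ī j̄} = b_{ij}/e_i for ī ∈ E_i, j̄ ∈ E_j. Then C is skew-symmetric, (C,(e_i),(E_i)) is an unfolding of B, and for every k, μ_k(C) (the composite mutation ∏_{k̄ ∈ E_k} μ_{k̄}) together with (e_i),(E_i) is an unfolding of μ_k(B) of the same form. -/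
/-! ### Auxiliary machinery -/

section Aux

variable {n : ℕ} (e : Fin n → ℕ) (k : Fin n) (a : Fin n → Fin n → ℤ)

/-- The exchange term of the mutation, at the level of the folded matrix `a`. -/
def Tterm (i j : Fin n) : ℤ :=
  max (a i k) 0 * max (a k j) 0 - max (-a i k) 0 * max (-a k j) 0

/-- The result of mutating the constant-block matrix `x y ↦ a x.1 y.1` at the
vertices `⟨k, z⟩` for `z ∈ L`. -/
def Fmat (L : List (Fin (e k))) :
    Matrix ((i : Fin n) × Fin (e i)) ((i : Fin n) × Fin (e i)) ℤ :=
  fun x y =>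
    if (∃ z ∈ L, (⟨k, z⟩ : (i : Fin n) × Fin (e i)) = x) ∨
        (∃ z ∈ L, (⟨k, z⟩ : (i : Fin n) × Fin (e i)) = y) then -(a x.1 y.1)
    else if x.1 = k ∨ y.1 = k then a x.1 y.1
    else a x.1 y.1 + L.length * Tterm k a x.1 y.1

variable {k}

lemma Fmat_diag (hkk : a k k = 0) (L : List (Fin (e k))) (p q : Fin (e k)) :
    Fmat e k a L ⟨k, p⟩ ⟨k, q⟩ = 0 := by
  unfold Fmat Tterm
  split_ifs <;> simp [hkk]

lemma Fmat_row (L : List (Fin (e k))) (p : Fin (e k)) {j : Fin n} (q : Fin (e j))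
    (hj : j ≠ k) :
    Fmat e k a L ⟨k, p⟩ ⟨j, q⟩ = if p ∈ L then -(a k j) else a k j := by
  unfold Fmat
  have h1 : (∃ z ∈ L, (⟨k, z⟩ : (i : Fin n) × Fin (e i)) = ⟨k, p⟩) ↔ p ∈ L := by
    simp [Sigma.mk.inj_iff]
  have h2 : ¬ (∃ z ∈ L, (⟨k, z⟩ : (i : Fin n) × Fin (e i)) = ⟨j, q⟩) := by
    rintro ⟨z, -, hz⟩
    exact hj (congrArg (fun s : (i : Fin n) × Fin (e i) => s.1) hz).symm
  by_cases hp : p ∈ L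
  · rw [if_pos (Or.inl (h1.mpr hp)), if_pos hp]
  · rw [if_neg (fun h => h.elim (fun hA => hp (h1.mp hA)) h2), if_pos (Or.inl rfl),
      if_neg hp]

lemma Fmat_col (L : List (Fin (e k))) {i : Fin n} (p : Fin (e i)) (q : Fin (e k))
    (hi : i ≠ k) :
    Fmat e k a L ⟨i, p⟩ ⟨k, q⟩ = if q ∈ L then -(a i k) else a i k := by
  unfold Fmat
  have h1 : (∃ z ∈ L, (⟨k, z⟩ : (i : Fin n) × Fin (e i)) = ⟨k, q⟩) ↔ q ∈ L := by
    simp [Sigma.mk.inj_iff]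
  have h2 : ¬ (∃ z ∈ L, (⟨k, z⟩ : (i : Fin n) × Fin (e i)) = ⟨i, p⟩) := by
    rintro ⟨z, -, hz⟩
    exact hi (congrArg (fun s : (i : Fin n) × Fin (e i) => s.1) hz).symm
  by_cases hq : q ∈ L
  · rw [if_pos (Or.inr (h1.mpr hq)), if_pos hq]
  · rw [if_neg (fun h => h.elim h2 (fun hA => hq (h1.mp hA))), if_pos (Or.inr rfl),
      if_neg hq]

lemma Fmat_out (L : List (Fin (e k))) {i j : Fin n} (p : Fin (e i)) (q : Fin (e j))
    (hi : i ≠ k) (hj : j ≠ k) :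
    Fmat e k a L ⟨i, p⟩ ⟨j, q⟩ = a i j + L.length * Tterm k a i j := by
  unfold Fmat
  have h2 : ∀ (m : Fin n) (r : Fin (e m)), m ≠ k →
      ¬ (∃ z ∈ L, (⟨k, z⟩ : (i : Fin n) × Fin (e i)) = ⟨m, r⟩) := by
    rintro m r hm ⟨z, -, hz⟩
    exact hm (congrArg (fun s : (i : Fin n) × Fin (e i) => s.1) hz).symm
  rw [if_neg (fun h => h.elim (h2 i p hi) (h2 j q hj)), if_neg (by simp [hi, hj])]

lemma foldl_Fmat (hkk : a k k = 0) (L : List (Fin (e k))) (hL : L.Nodup) :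
    ((L.map (fun z => mutFZ (⟨k, z⟩ : (i : Fin n) × Fin (e i)))).foldl
      (fun M f => f M) (fun x y => a x.1 y.1)) = Fmat e k a L := by
  induction L using List.reverseRecOn with
  | nil =>
    funext x y
    unfold Fmat
    simp only [List.map_nil, List.foldl_nil, List.not_mem_nil, false_and, exists_false,
      or_self, if_false, List.length_nil, Nat.cast_zero, zero_mul, add_zero]
    split_ifs <;> rfl
  | append_singleton L z ih =>
    obtain ⟨hN, -, hdisj⟩ := List.nodup_append'.mp hL
    have hzL : z ∉ L := fun h => hdisj h (List.mem_singleton_self z)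
    rw [List.map_append]
    erw [List.foldl_append, ih hN]
    show mutFZ (⟨k, z⟩ : (i : Fin n) × Fin (e i)) (Fmat e k a L) = Fmat e k a (L ++ [z])
    funext x y
    rcases x with ⟨i, p⟩
    rcases y with ⟨j, q⟩
    by_cases hik : k = i
    · subst hik
      by_cases hjk : k = j
      · subst hjk
        simp only [mutFZ, Fmat_diag e a hkk]
        split_ifs <;> simp
      · -- row block k, column block j ≠ k
        have hjk' : j ≠ k := Ne.symm hjk
        have hRHS := Fmat_row e a (L ++ [z]) p q hjk'
        have hLHS := Fmat_row e a L p q hjk'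
        have hyne : ¬ ((⟨j, q⟩ : (i : Fin n) × Fin (e i)) = ⟨k, z⟩) := fun h =>
          hjk' (congrArg (fun s : (i : Fin n) × Fin (e i) => s.1) h)
        unfold mutFZ
        by_cases hp : p = z
        · subst hp
          rw [if_pos (Or.inl rfl), hLHS, if_neg hzL, hRHS,
            if_pos (List.mem_append.mpr (Or.inr (List.mem_singleton_self p)))]
        · have hxne : ¬ ((⟨k, p⟩ : (i : Fin n) × Fin (e i)) = ⟨k, z⟩) := by
            simp [Sigma.mk.inj_iff, hp]
          rw [if_neg (fun h => h.elim hxne hyne), Fmat_diag e a hkk, hLHS, hRHS]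
          have hmem : p ∈ L ++ [z] ↔ p ∈ L := by simp [hp]
          rw [if_congr hmem rfl rfl]
          simp
    · by_cases hjk : k = j
      · subst hjk
        have hik' : i ≠ k := Ne.symm hik
        have hRHS := Fmat_col e a (L ++ [z]) p q hik'
        have hLHS := Fmat_col e a L p q hik'
        have hxne : ¬ ((⟨i, p⟩ : (i : Fin n) × Fin (e i)) = ⟨k, z⟩) := fun h =>
          hik' (congrArg (fun s : (i : Fin n) × Fin (e i) => s.1) h)
        unfold mutFZ
        by_cases hq : q = z
        · subst hq
          rw [if_pos (Or.inr rfl), hLHS, if_neg hzL, hRHS,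
            if_pos (List.mem_append.mpr (Or.inr (List.mem_singleton_self q)))]
        · have hyne : ¬ ((⟨k, q⟩ : (i : Fin n) × Fin (e i)) = ⟨k, z⟩) := by
            simp [Sigma.mk.inj_iff, hq]
          rw [if_neg (fun h => h.elim hxne hyne), Fmat_diag e a hkk, hLHS, hRHS]
          have hmem : q ∈ L ++ [z] ↔ q ∈ L := by simp [hq]
          rw [if_congr hmem rfl rfl]
          simp
      · -- both off block k
        have hik' : i ≠ k := Ne.symm hik
        have hjk' : j ≠ k := Ne.symm hjk
        have hxne : ¬ ((⟨i, p⟩ : (i : Fin n) × Fin (e i)) = ⟨k, z⟩) := fun h =>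
          hik' (congrArg (fun s : (i : Fin n) × Fin (e i) => s.1) h)
        have hyne : ¬ ((⟨j, q⟩ : (i : Fin n) × Fin (e i)) = ⟨k, z⟩) := fun h =>
          hjk' (congrArg (fun s : (i : Fin n) × Fin (e i) => s.1) h)
        unfold mutFZ
        rw [if_neg (fun h => h.elim hxne hyne), Fmat_out e a L p q hik' hjk',
          Fmat_out e a (L ++ [z]) p q hik' hjk', Fmat_col e a L p z hik', if_neg hzL,
          Fmat_row e a L z q hjk', if_neg hzL]
        simp only [List.length_append, List.length_singleton, Nat.cast_add, Nat.cast_one]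
        unfold Tterm
        ring

/-- Generic fact: constant-block matrices built from a skew-symmetrizable divisible `B`
give unfoldings. -/
lemma isUnfolding_of_blocks {n : ℕ} (B : Matrix (Fin n) (Fin n) ℤ) (e : Fin n → ℕ)
    (hpos : ∀ i, 0 < e i)
    (hskew : ∀ i j, B i j * (e j : ℤ) = -(B j i * (e i : ℤ)))
    (hdvd : ∀ i j, (e i : ℤ) ∣ B i j)
    (C : Matrix ((i : Fin n) × Fin (e i)) ((i : Fin n) × Fin (e i)) ℤ)
    (hC : ∀ x y, C x y = B x.1 y.1 / (e x.1 : ℤ)) :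
    (∀ x y, C y x = -C x y) ∧ IsUnfolding B e C := by
  have hene : ∀ i, ((e i : ℤ)) ≠ 0 := fun i => Nat.cast_ne_zero.mpr (hpos i).ne'
  have haB : ∀ i j, B i j = (e i : ℤ) * (B i j / (e i : ℤ)) :=
    fun i j => (Int.mul_ediv_cancel' (hdvd i j)).symm
  have haskew : ∀ i j, B j i / (e j : ℤ) = -(B i j / (e i : ℤ)) := by
    intro i j
    have h := hskew i j
    rw [haB i j, haB j i] at h
    have h2 : ((e i : ℤ) * (e j : ℤ)) * (B j i / (e j : ℤ)) =
        ((e i : ℤ) * (e j : ℤ)) * (-(B i j / (e i : ℤ))) := by linear_combination h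
    exact mul_left_cancel₀ (mul_ne_zero (hene i) (hene j)) h2
  have hskewC : ∀ x y, C y x = -C x y := by
    intro x y
    rw [hC, hC, haskew]
  refine ⟨hskewC, hpos, hskew, hskewC, ?_, ?_⟩
  · intro i j q
    have : ∀ p : Fin (e i), C ⟨i, p⟩ ⟨j, q⟩ = B i j / (e i : ℤ) := fun p => hC _ _
    rw [Finset.sum_congr rfl (fun p _ => this p), Finset.sum_const, Finset.card_univ,
      Fintype.card_fin, nsmul_eq_mul]
    exact (haB i j).symm
  · intro i j hB p q
    rw [hC]
    exact Int.ediv_nonneg hB (by positivity)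

end Aux

/-- Global unfoldings exist in the divisible case: if `B` is skew-symmetrizable via
positive integers `eᵢ` with `bᵢⱼeⱼ = -bⱼᵢeᵢ` and `eᵢ ∣ bᵢⱼ` for all `i,j`, then the matrix
`C` with constant blocks `c_{ī j̄} = bᵢⱼ/eᵢ` is skew-symmetric, `(C,(eᵢ),(Eᵢ))` is an
unfolding of `B`, and for every `k` the composite mutation `μ_k(C)` is an unfolding of
`μ_k(B)` of the same form. -/
theorem stmt19 {n : ℕ} (B : Matrix (Fin n) (Fin n) ℤ) (e : Fin n → ℕ)
    (hpos : ∀ i, 0 < e i)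
    (hskew : ∀ i j, B i j * (e j : ℤ) = -(B j i * (e i : ℤ)))
    (hdvd : ∀ i j, (e i : ℤ) ∣ B i j)
    (C : Matrix ((i : Fin n) × Fin (e i)) ((i : Fin n) × Fin (e i)) ℤ)
    (hC : ∀ x y, C x y = B x.1 y.1 / (e x.1 : ℤ)) :
    (∀ x y, C y x = -C x y) ∧
    IsUnfolding B e C ∧
    ∀ k : Fin n,
      IsUnfolding (mutFZ k B) e (compMut k C) ∧
      (∀ x y, compMut k C x y = mutFZ k B x.1 y.1 / (e x.1 : ℤ)) := by
  obtain ⟨hskewC, hUnf⟩ := isUnfolding_of_blocks B e hpos hskew hdvd C hC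
  refine ⟨hskewC, hUnf, ?_⟩
  intro k
  -- the folded entries
  set a : Fin n → Fin n → ℤ := fun i j => B i j / (e i : ℤ) with ha
  have hene : ∀ i, ((e i : ℤ)) ≠ 0 := fun i => Nat.cast_ne_zero.mpr (hpos i).ne'
  have hepos : ∀ i, (0:ℤ) < (e i : ℤ) := fun i => by exact_mod_cast hpos i
  have haB : ∀ i j, B i j = (e i : ℤ) * a i j :=
    fun i j => (Int.mul_ediv_cancel' (hdvd i j)).symm
  have haskew : ∀ i j, a j i = -(a i j) := by
    intro i j
    have h := hskew i j
    rw [haB i j, haB j i] at h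
    have h2 : ((e i : ℤ) * (e j : ℤ)) * a j i =
        ((e i : ℤ) * (e j : ℤ)) * (-(a i j)) := by linear_combination h
    exact mul_left_cancel₀ (mul_ne_zero (hene i) (hene j)) h2
  have hkk : a k k = 0 := by have := haskew k k; linarith
  have hCa : C = fun x y => a x.1 y.1 := funext fun x => funext fun y => hC x y
  -- the mutated folded entries
  set a' : Fin n → Fin n → ℤ := fun i j =>
    if i = k ∨ j = k then -(a i j) else a i j + (e k : ℤ) * Tterm k a i j with ha'
  have ha'skew : ∀ i j, a' j i = -(a' i j) := by
    intro i j
    simp only [ha']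
    by_cases h : i = k ∨ j = k
    · rw [if_pos h.symm, if_pos h, haskew i j, neg_neg]
    · rw [if_neg (fun hc => h hc.symm), if_neg h, haskew i j]
      unfold Tterm
      rw [haskew k j, haskew i k]
      simp only [neg_neg]
      ring
  have hmax : ∀ (m t : ℤ), 0 ≤ m → max (m * t) 0 = m * max t 0 := by
    intro m t hm
    rw [mul_max_of_nonneg _ _ hm, mul_zero]
  have hB' : ∀ i j, mutFZ k B i j = (e i : ℤ) * a' i j := by
    intro i j
    unfold mutFZ
    simp only [ha']
    by_cases h : i = k ∨ j = k
    · rw [if_pos h, if_pos h, haB i j]; ring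
    · rw [if_neg h, if_neg h, haB i j, haB i k, haB k j]
      rw [show -((e i : ℤ) * a i k) = (e i : ℤ) * (-(a i k)) by ring,
        show -((e k : ℤ) * a k j) = (e k : ℤ) * (-(a k j)) by ring,
        hmax _ _ (le_of_lt (hepos i)), hmax _ _ (le_of_lt (hepos k)),
        hmax _ _ (le_of_lt (hepos i)), hmax _ _ (le_of_lt (hepos k))]
      unfold Tterm
      ring
  have hdvd' : ∀ i j, (e i : ℤ) ∣ mutFZ k B i j := fun i j => ⟨a' i j, hB' i j⟩
  have hskew' : ∀ i j, mutFZ k B i j * (e j : ℤ) = -(mutFZ k B j i * (e i : ℤ)) := by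
    intro i j
    rw [hB' i j, hB' j i, ha'skew i j]
    ring
  have ha'div : ∀ i j, a' i j = mutFZ k B i j / (e i : ℤ) := by
    intro i j
    rw [hB' i j, Int.mul_ediv_cancel_left _ (hene i)]
  -- compute the composite mutation
  have hcomp : compMut k C = Fmat e k a (List.finRange (e k)) := by
    rw [compMut, hCa]
    exact foldl_Fmat e a hkk _ (List.nodup_finRange _)
  have hval : ∀ x y, compMut k C x y = a' x.1 y.1 := by
    intro x y
    rcases x with ⟨i, p⟩
    rcases y with ⟨j, q⟩
    rw [hcomp]
    simp only [ha']
    by_cases hik : k = i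
    · subst hik
      by_cases hjk : k = j
      · subst hjk
        rw [Fmat_diag e a hkk, if_pos (Or.inl rfl), hkk, neg_zero]
      · rw [Fmat_row e a _ p q (Ne.symm hjk), if_pos (List.mem_finRange p),
          if_pos (Or.inl rfl)]
    · by_cases hjk : k = j
      · subst hjk
        rw [Fmat_col e a _ p q (Ne.symm hik), if_pos (List.mem_finRange q),
          if_pos (Or.inr rfl)]
      · rw [Fmat_out e a _ p q (Ne.symm hik) (Ne.symm hjk),
          if_neg (fun h => h.elim (fun h => hik h.symm) (fun h => hjk h.symm)),
          List.length_finRange]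
  have hval' : ∀ x y, compMut k C x y = mutFZ k B x.1 y.1 / (e x.1 : ℤ) := by
    intro x y
    rw [hval x y, ha'div]
  exact ⟨(isUnfolding_of_blocks (mutFZ k B) e hpos hskew' hdvd' (compMut k C) hval').2,
    hval'⟩
end
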